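/- arXiv:2510.15814 — 5 statements merged into one kernel-verified Lean document; each statement's English description precedes it below -/
import Mathlib

section
/- Let G be a finite group acting on a finite set X, let V be a permutation representation of G, fix x ∈ X with stabilizer G_x = {g ∈ G : gx = x}, and let π_x : ℝ^X → ℝ be the x-th coordinate projection. Let ρ = ρ(𝒩) be the separation relation of a family 𝒩 of continuous G-equivariant maps V → ℝ^X. Then the pushforward f ↦ π_x ∘ f maps C_{G,ρ}(V, ℝ^X) := C_G(V, ℝ^X) ∩ C_ρ(V, ℝ^X) surjectively onto C_{G_x,ρ}(V, ℝ), the space of continuous G_x-invariant real-valued functions on V respecting ρ. -/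
open scoped BigOperators

noncomputable section EquivUnivPreamble

/-- Point-wise activation: apply `σ` coordinatewise. -/
def act (σ : ℝ → ℝ) {Z : Type} (v : Z → ℝ) : Z → ℝ := fun z => σ (v z)

/-- The action of a group element `g` on a real-valued function `v : Y → ℝ` induced by a
`G`-action on `Y` (the permutation representation `ℝ^Y`): `(g • v) y = v (g⁻¹ • y)`. -/
def pSMul {G Y : Type} [Group G] [MulAction G Y] (g : G) (v : Y → ℝ) : Y → ℝ :=
  fun y => v (g⁻¹ • y)

/-- `G`-equivariance of a map between permutation representations. -/
def Equivariant (G : Type) [Group G] {Y Z : Type} [MulAction G Y] [MulAction G Z]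
    (f : (Y → ℝ) → (Z → ℝ)) : Prop :=
  ∀ (g : G) (v : Y → ℝ), f (pSMul g v) = pSMul g (f v)

/-- A map between permutation representations is affine. -/
def IsAffine {Y Z : Type} (f : (Y → ℝ) → (Z → ℝ)) : Prop :=
  ∃ (φ : (Y → ℝ) →ₗ[ℝ] (Z → ℝ)) (b : Z → ℝ), ∀ v, f v = φ v + b

/-- A layer space: the set of maps `v ↦ ∑ᵢ cᵢ φⁱ(v) + b` where `φ¹, …, φᵏ` are fixed
`G`-equivariant linear maps and the bias `b` ranges over all functions constant on
`G`-orbits (i.e. all `∑ⱼ yⱼ 1_{Xⱼ}` with `Xⱼ` the orbits). -/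
def IsLayerSpace (G : Type) [Group G] {Y Z : Type} [MulAction G Y] [MulAction G Z]
    (M : Set ((Y → ℝ) → (Z → ℝ))) : Prop :=
  ∃ (k : ℕ) (φ : Fin k → ((Y → ℝ) →ₗ[ℝ] (Z → ℝ))),
    (∀ i, Equivariant G (φ i : (Y → ℝ) → (Z → ℝ))) ∧
    M = { f | ∃ (c : Fin k → ℝ) (b : Z → ℝ),
            (∀ (g : G) (z : Z), b (g • z) = b z) ∧
            ∀ v, f v = (∑ i, c i • φ i v) + b }

/-- `M^{k×h}`: the layer space `M` with input multiplicity `k` and output multiplicity `h`,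
`(v₁,…,v_k) ↦ (∑ⱼ f_{1,j}(vⱼ), …, ∑ⱼ f_{h,j}(vⱼ))`, identifying `V ⊗ ℝᵏ` with
`Fin k × Y → ℝ`. -/
def layerPow {Y Z : Type} (M : Set ((Y → ℝ) → (Z → ℝ))) (k h : ℕ) :
    Set ((Fin k × Y → ℝ) → (Fin h × Z → ℝ)) :=
  { F | ∃ f : Fin h → Fin k → ((Y → ℝ) → (Z → ℝ)),
      (∀ i j, f i j ∈ M) ∧
      ∀ (v : Fin k × Y → ℝ) (p : Fin h × Z), F v p = ∑ j, f p.1 j (fun y => v (j, y)) p.2 }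

/-- `M^{1×h}` under the canonical identification `V ⊗ ℝ¹ ≅ V` of the input. -/
def layerPowIn {Y Z : Type} (M : Set ((Y → ℝ) → (Z → ℝ))) (h : ℕ) :
    Set ((Y → ℝ) → (Fin h × Z → ℝ)) :=
  { F | ∃ f : Fin h → ((Y → ℝ) → (Z → ℝ)), (∀ i, f i ∈ M) ∧
      ∀ (v : Y → ℝ) (p : Fin h × Z), F v p = f p.1 v p.2 }

/-- `M^{k×1}` under the canonical identification `W ⊗ ℝ¹ ≅ W` of the output. -/
def layerPowOut {Y Z : Type} (M : Set ((Y → ℝ) → (Z → ℝ))) (k : ℕ) :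
    Set ((Fin k × Y → ℝ) → (Z → ℝ)) :=
  { F | ∃ f : Fin k → ((Y → ℝ) → (Z → ℝ)), (∀ j, f j ∈ M) ∧
      ∀ (v : Fin k × Y → ℝ) (z : Z), F v z = ∑ j, f j (fun y => v (j, y)) z }

/-- Evaluation of a chain of `d+1` layers with the point-wise activation `σ` between
consecutive layers: `φ_d ∘ σ̃ ∘ ⋯ ∘ σ̃ ∘ φ_0`. -/
def chainEval (σ : ℝ → ℝ) : ∀ (d : ℕ) (Y : Fin (d + 2) → Type)
    (φ : ∀ i : Fin (d + 1), (Y i.castSucc → ℝ) → (Y i.succ → ℝ)),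
    (Y 0 → ℝ) → (Y (Fin.last (d + 1)) → ℝ)
  | 0, _, φ => φ 0
  | (d + 1), Y, φ => fun v =>
      φ (Fin.last (d + 1))
        (act σ (chainEval σ d (fun i : Fin (d + 2) => Y i.castSucc)
          (fun i : Fin (d + 1) => φ i.castSucc) v))

/-- The neural space `N(M₀, …, M_d)` of a chain of `d+1` layer spaces. -/
def NeuralSpace (σ : ℝ → ℝ) (d : ℕ) (Y : Fin (d + 2) → Type)
    (M : ∀ i : Fin (d + 1), Set ((Y i.castSucc → ℝ) → (Y i.succ → ℝ))) :
    Set ((Y 0 → ℝ) → (Y (Fin.last (d + 1)) → ℝ)) :=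
  { F | ∃ φ : ∀ i : Fin (d + 1), (Y i.castSucc → ℝ) → (Y i.succ → ℝ),
      (∀ i, φ i ∈ M i) ∧ F = chainEval σ d Y φ }

/-- All networks `N(M₀^{1×k₁}, M₁^{k₁×k₂}, …, M_d^{k_d×k})` for the chain `M₀,…,M_d`, with
arbitrary interior multiplicities and fixed output multiplicity `k` (union over the interior
multiplicities). -/
def WPre (σ : ℝ → ℝ) : ∀ (d : ℕ) (Y : Fin (d + 2) → Type)
    (M : ∀ i : Fin (d + 1), Set ((Y i.castSucc → ℝ) → (Y i.succ → ℝ))) (k : ℕ),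
    Set ((Y 0 → ℝ) → (Fin k × Y (Fin.last (d + 1)) → ℝ))
  | 0, _, M, k => layerPowIn (M 0) k
  | (d + 1), Y, M, k =>
      { F | ∃ (k' : ℕ) (g : (Y 0 → ℝ) → (Fin k' × Y (Fin.last (d + 1)).castSucc → ℝ)),
          g ∈ WPre σ d (fun i : Fin (d + 2) => Y i.castSucc)
                (fun i : Fin (d + 1) => M i.castSucc) k' ∧
          ∃ f ∈ layerPow (M (Fin.last (d + 1))) k' k,
          F = fun v => f (act σ (g v)) }

/-- The network space `N(M₀^{1×k}, M₁^{k×k}, …, M_d^{k×k})`: all multiplicities equal to `k`. -/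
def WFix (σ : ℝ → ℝ) : ∀ (d : ℕ) (Y : Fin (d + 2) → Type)
    (M : ∀ i : Fin (d + 1), Set ((Y i.castSucc → ℝ) → (Y i.succ → ℝ))) (k : ℕ),
    Set ((Y 0 → ℝ) → (Fin k × Y (Fin.last (d + 1)) → ℝ))
  | 0, _, M, k => layerPowIn (M 0) k
  | (d + 1), Y, M, k =>
      { F | ∃ g ∈ WFix σ d (fun i : Fin (d + 2) => Y i.castSucc)
                (fun i : Fin (d + 1) => M i.castSucc) k,
          ∃ f ∈ layerPow (M (Fin.last (d + 1))) k k,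
          F = fun v => f (act σ (g v)) }

/-- Closure in the topology of uniform convergence on compact sets. -/
def UnifClosure {A B : Type} [TopologicalSpace A] [PseudoMetricSpace B]
    (S : Set (A → B)) : Set (A → B) :=
  { F | ∀ K : Set A, IsCompact K → ∀ ε : ℝ, 0 < ε → ∃ g ∈ S, ∀ x ∈ K, dist (F x) (g x) < ε }

/-- Separation relation of a family of functions. -/
def sepRel {A B : Type} (S : Set (A → B)) : Set (A × A) :=
  { p | ∀ f ∈ S, f p.1 = f p.2 }

/-- Entry-wise separation relation at the output entry `z`. -/
def sepRelAt {A Z : Type} (S : Set (A → (Z → ℝ))) (z : Z) : Set (A × A) :=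
  { p | ∀ f ∈ S, f p.1 z = f p.2 z }

/-- `C_ρ(A, B)`: continuous functions respecting the relation `ρ`. -/
def Crho {A B : Type} [TopologicalSpace A] [TopologicalSpace B] (ρ : Set (A × A)) :
    Set (A → B) :=
  { f | Continuous f ∧ ∀ p ∈ ρ, f p.1 = f p.2 }

/-- `C_ρ̄(A, ℝ^Z)` for a family of entry-wise relations `ρ̄ = (ρ_z)_{z ∈ Z}`. -/
def CrhoEntryRel {A Z : Type} [TopologicalSpace A] (ρ : Z → Set (A × A)) :
    Set (A → (Z → ℝ)) :=
  { f | Continuous f ∧ ∀ (z : Z), ∀ p ∈ ρ z, f p.1 z = f p.2 z }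

/-- `σ` is not a polynomial function. -/
def NotPolynomial (σ : ℝ → ℝ) : Prop :=
  ¬ ∃ p : Polynomial ℝ, ∀ x : ℝ, σ x = Polynomial.eval x p

/-- `c+1` widened copies of the layer space `M ⊆ Aff_G(ℝ^Z, ℝ^Z)`, from input multiplicity
`kin` to output multiplicity `kout` (union over interior multiplicities). -/
def WRep (σ : ℝ → ℝ) {Z : Type} (M : Set ((Z → ℝ) → (Z → ℝ))) :
    ∀ (_c kin kout : ℕ), Set ((Fin kin × Z → ℝ) → (Fin kout × Z → ℝ))
  | 0, kin, kout => layerPow M kin kout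
  | (c + 1), kin, kout =>
      { F | ∃ k, ∃ g ∈ WRep σ M c kin k, ∃ f ∈ layerPow M k kout,
          F = fun v => f (act σ (g v)) }

/-- `c+1` widened copies of `M`, starting at input multiplicity `kin` and ending with
output multiplicity `1` (canonically identified with `ℝ^Z`). -/
def WRepOut (σ : ℝ → ℝ) {Z : Type} (M : Set ((Z → ℝ) → (Z → ℝ))) :
    ∀ (_c kin : ℕ), Set ((Fin kin × Z → ℝ) → (Z → ℝ))
  | 0, kin => layerPowOut M kin
  | (c + 1), kin =>
      { F | ∃ k, ∃ g ∈ WRep σ M c kin k, ∃ f ∈ layerPowOut M k,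
          F = fun v => f (act σ (g v)) }

/-- `c+1` widened copies of `M`, with input multiplicity `1` (identified with `ℝ^Z`) and
output multiplicity `k`. -/
def WRepIn (σ : ℝ → ℝ) {Z : Type} (M : Set ((Z → ℝ) → (Z → ℝ))) :
    ∀ (_c k : ℕ), Set ((Z → ℝ) → (Fin k × Z → ℝ))
  | 0, k => layerPowIn M k
  | (c + 1), k =>
      { F | ∃ k', ∃ g ∈ WRepIn σ M c k', ∃ f ∈ layerPow M k' k,
          F = fun v => f (act σ (g v)) }

/-- The universality class `U(M, …, M)` of `c+2` copies of a layer space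
`M ⊆ Aff_G(ℝ^Z, ℝ^Z)`. -/
def UClassRep (σ : ℝ → ℝ) {Z : Type} [Fintype Z] (M : Set ((Z → ℝ) → (Z → ℝ))) (c : ℕ) :
    Set ((Z → ℝ) → (Z → ℝ)) :=
  UnifClosure { F | ∃ k, ∃ g ∈ WRepIn σ M c k, ∃ f ∈ layerPowOut M k,
      F = fun v => f (act σ (g v)) }

/-- The universality class `U(M₀, …, M_d, M, …, M)` of the chain `M₀, …, M_d` followed by
`c+1` copies of `M`. -/
def UClassPreRep (σ : ℝ → ℝ) (d : ℕ) (Y : Fin (d + 2) → Type)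
    [Fintype (Y (Fin.last (d + 1)))]
    (Mpre : ∀ i : Fin (d + 1), Set ((Y i.castSucc → ℝ) → (Y i.succ → ℝ)))
    (M : Set ((Y (Fin.last (d + 1)) → ℝ) → (Y (Fin.last (d + 1)) → ℝ))) (c : ℕ) :
    Set ((Y 0 → ℝ) → (Y (Fin.last (d + 1)) → ℝ)) :=
  UnifClosure { F | ∃ k, ∃ g ∈ WPre σ d Y Mpre k, ∃ f ∈ WRepOut σ M c k,
      F = fun v => f (act σ (g v)) }

/-- The universality class `U(M₀, …, M_d, N)` of the chain `M₀, …, M_d` followed by one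
extra layer space `N`. -/
def UClassApp1 (σ : ℝ → ℝ) (d : ℕ) (Y : Fin (d + 2) → Type)
    (M : ∀ i : Fin (d + 1), Set ((Y i.castSucc → ℝ) → (Y i.succ → ℝ)))
    {Z : Type} [Fintype Z]
    (N : Set ((Y (Fin.last (d + 1)) → ℝ) → (Z → ℝ))) : Set ((Y 0 → ℝ) → (Z → ℝ)) :=
  UnifClosure { F | ∃ k, ∃ g ∈ WPre σ d Y M k, ∃ f ∈ layerPowOut N k,
      F = fun v => f (act σ (g v)) }

/-- The universality class `U(M₀, …, M_d, N₁, N₂)` of the chain `M₀, …, M_d` followed by two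
extra layer spaces `N₁, N₂`. -/
def UClassApp2 (σ : ℝ → ℝ) (d : ℕ) (Y : Fin (d + 2) → Type)
    (M : ∀ i : Fin (d + 1), Set ((Y i.castSucc → ℝ) → (Y i.succ → ℝ)))
    {Z₁ Z₂ : Type} [Fintype Z₂]
    (N₁ : Set ((Y (Fin.last (d + 1)) → ℝ) → (Z₁ → ℝ)))
    (N₂ : Set ((Z₁ → ℝ) → (Z₂ → ℝ))) : Set ((Y 0 → ℝ) → (Z₂ → ℝ)) :=
  UnifClosure { F | ∃ k₁, ∃ g ∈ WPre σ d Y M k₁, ∃ k₂, ∃ m ∈ layerPow N₁ k₁ k₂,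
      ∃ f ∈ layerPowOut N₂ k₂, F = fun v => f (act σ (m (act σ (g v)))) }

/-- The universality class `U(M₁, M₂, M₃)` of three layer spaces on a common space `ℝ^Z`. -/
def UClass3 (σ : ℝ → ℝ) {Z : Type} [Fintype Z] (M₁ M₂ M₃ : Set ((Z → ℝ) → (Z → ℝ))) :
    Set ((Z → ℝ) → (Z → ℝ)) :=
  UnifClosure { F | ∃ k₁ k₂, ∃ g ∈ layerPowIn M₁ k₁, ∃ m ∈ layerPow M₂ k₁ k₂,
      ∃ f ∈ layerPowOut M₃ k₂, F = fun v => f (act σ (m (act σ (g v)))) }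

/-- The invariant layer space `I = Aff_G(ℝ^Y, ℝ)`: all `G`-invariant affine maps, with `ℝ`
realized as the trivial permutation representation `ℝ^{Unit}`. -/
def InvAff (G : Type) [Group G] {Y : Type} [MulAction G Y] :
    Set ((Y → ℝ) → (Unit → ℝ)) :=
  { f | IsAffine f ∧ ∀ (g : G) (v : Y → ℝ), f (pSMul g v) = f v }

/-- The fully connected layer space `L = Aff(ℝ, ℝ)`, with `ℝ` realized as `ℝ^{Unit}`. -/
def Lfull : Set ((Unit → ℝ) → (Unit → ℝ)) :=
  { f | ∃ a b : ℝ, f = fun v _ => a * v () + b }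

/-- The width-1 convolutional layer space `C ⊆ Aff_G(ℝ^X, ℝ^X)`:
`v ↦ a·v + (bias constant on `G`-orbits)`, i.e. `v ↦ a·v + ∑ⱼ yⱼ 1_{Xⱼ}`. -/
def ConvG (G : Type) [Group G] {X : Type} [MulAction G X] : Set ((X → ℝ) → (X → ℝ)) :=
  { f | ∃ (a : ℝ) (b : X → ℝ), (∀ (g : G) (z : X), b (g • z) = b z) ∧
      f = fun v z => a * v z + b z }

/-- The width-1 convolutional layer space for `S_n` acting on `ℝ^n`:
`C = { v ↦ a·v + b𝟙 }`. -/
def ConvC (n : ℕ) : Set ((Fin n → ℝ) → (Fin n → ℝ)) :=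
  { f | ∃ a b : ℝ, f = fun v i => a * v i + b }

/-- The PointNet (DeepSets) layer space for `S_n` acting on `ℝ^n`:
`P = { v ↦ (a·Id + c·𝟙𝟙ᵀ) v + b𝟙 }`. -/
def PointNetP (n : ℕ) : Set ((Fin n → ℝ) → (Fin n → ℝ)) :=
  { f | ∃ a c b : ℝ, f = fun v i => a * v i + c * (∑ j, v j) + b }
end EquivUnivPreamble

lemma pSMul_mul {G Y : Type} [Group G] [MulAction G Y] (a b : G) (v : Y → ℝ) :
    pSMul a (pSMul b v) = pSMul (a * b) v := by
  funext y; simp [pSMul, mul_smul]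

lemma pSMul_continuous {G Y : Type} [Group G] [MulAction G Y] (g : G) :
    Continuous (pSMul (Y := Y) g) := by
  exact continuous_pi fun y => continuous_apply _

/-- Proposition `prop:separation-projection`: the pushforward
`f ↦ π_x ∘ f` maps `C_{G,ρ}(V, ℝ^X) = C_G(V, ℝ^X) ∩ C_ρ(V, ℝ^X)` surjectively onto
`C_{G_x,ρ}(V, ℝ)`, where `ρ = ρ(𝒩)` is the separation relation of a family `𝒩` of
continuous `G`-equivariant maps `V → ℝ^X`. -/
theorem pushforward_surjective_onto_invariant_sep_constrained
    {G : Type} [Group G] [Fintype G]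
    {X : Type} [Fintype X] [MulAction G X]
    {Y : Type} [Fintype Y] [MulAction G Y]
    (x : X)
    (𝒩 : Set ((Y → ℝ) → (X → ℝ)))
    (h𝒩 : ∀ f ∈ 𝒩, Continuous f ∧ Equivariant G f) :
    (fun (f : (Y → ℝ) → (X → ℝ)) => fun v => f v x) ''
        { f | (Continuous f ∧ Equivariant G f) ∧ ∀ p ∈ sepRel 𝒩, f p.1 = f p.2 }
      = { h : (Y → ℝ) → ℝ | (Continuous h ∧
            ∀ g ∈ MulAction.stabilizer G x, ∀ v, h (pSMul g v) = h v) ∧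
            ∀ p ∈ sepRel 𝒩, h p.1 = h p.2 } := by
  ext h
  constructor
  · rintro ⟨f, ⟨⟨hfc, hfe⟩, hfρ⟩, rfl⟩
    refine ⟨⟨(continuous_apply x).comp hfc, ?_⟩, fun p hp => by
      show f p.1 x = f p.2 x; rw [hfρ p hp]⟩
    intro g hg v
    show f (pSMul g v) x = f v x
    have := congrFun (hfe g v) x
    simp only [pSMul] at this
    rw [this]
    have hx : g⁻¹ • x = x := by
      have h1 : g • x = x := hg
      nth_rewrite 1 [← h1]
      rw [inv_smul_smul]
    rw [hx]
  · rintro ⟨⟨hhc, hhi⟩, hhρ⟩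
    -- key: h (pSMul g v) = h (pSMul g' v) whenever g • x = g' • x
    have key : ∀ (g g' : G) (v : Y → ℝ), g • x = g' • x →
        h (pSMul g⁻¹ v) = h (pSMul g'⁻¹ v) := by
      intro g g' v hgg
      have hs : g'⁻¹ * g ∈ MulAction.stabilizer G x := by
        simp [MulAction.mem_stabilizer_iff, mul_smul, hgg]
      have := hhi _ (inv_mem hs) (pSMul g'⁻¹ v)
      rw [pSMul_mul] at this
      have e : (g'⁻¹ * g)⁻¹ * g'⁻¹ = g⁻¹ := by group
      rw [e] at this
      exact this
    classical
    refine ⟨fun v x' => if hx' : ∃ g : G, g • x = x' then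
        h (pSMul (hx'.choose)⁻¹ v) else 0, ⟨⟨?_, ?_⟩, ?_⟩, ?_⟩
    · -- continuity
      refine continuous_pi fun x' => ?_
      by_cases hx' : ∃ g : G, g • x = x'
      · simp only [dif_pos hx']
        exact hhc.comp (pSMul_continuous _)
      · simp only [dif_neg hx']
        exact continuous_const
    · -- equivariance
      intro g v
      funext x'
      simp only [pSMul]
      by_cases hx' : ∃ g' : G, g' • x = x'
      · have hx'' : ∃ g' : G, g' • x = g⁻¹ • x' := by
          obtain ⟨c, hc⟩ := hx'
          exact ⟨g⁻¹ * c, by rw [mul_smul, hc]⟩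
        rw [dif_pos hx', dif_pos hx'']
        rw [pSMul_mul]
        have hcx : hx'.choose • x = x' := hx'.choose_spec
        have hcx' : hx''.choose • x = g⁻¹ • x' := hx''.choose_spec
        have e : hx'.choose⁻¹ * g = (g⁻¹ * hx'.choose)⁻¹ := by group
        rw [e]
        refine key _ _ v ?_
        rw [mul_smul, hcx, hcx']
      · have hx'' : ¬ ∃ g' : G, g' • x = g⁻¹ • x' := by
          rintro ⟨c, hc⟩
          exact hx' ⟨g * c, by rw [mul_smul, hc, smul_inv_smul]⟩
        rw [dif_neg hx', dif_neg hx'']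
    · -- respects sepRel
      intro p hp
      funext x'
      show (if hh : ∃ g : G, g • x = x' then h (pSMul (hh.choose)⁻¹ p.1) else 0)
        = (if hh : ∃ g : G, g • x = x' then h (pSMul (hh.choose)⁻¹ p.2) else 0)
      by_cases hx' : ∃ g : G, g • x = x'
      · rw [dif_pos hx', dif_pos hx']
        refine hhρ (pSMul (hx'.choose)⁻¹ p.1, pSMul (hx'.choose)⁻¹ p.2) ?_
        intro n hn
        have hne := (h𝒩 n hn).2
        rw [hne, hne, hp n hn]
      · rw [dif_neg hx', dif_neg hx']
    · -- projection at x equals h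
      funext v
      have hx' : ∃ g : G, g • x = x := ⟨1, one_smul _ _⟩
      show (if hh : ∃ g : G, g • x = x then h (pSMul (hh.choose)⁻¹ v) else 0) = h v
      rw [dif_pos hx']
      have hone : hx'.choose • x = (1 : G) • x := by rw [hx'.choose_spec, one_smul]
      rw [key _ 1 v hone]
      have : pSMul ((1:G))⁻¹ v = v := by funext y; simp [pSMul]
      rw [this]
end

section
/- Let G be a finite group, V_0, …, V_d permutation representations of G, and M_i ⊆ Aff_G(V_{i-1}, V_i) layer spaces for i = 1, …, d, each a finite-dimensional real vector space of affine maps. For each i choose a basis ℬ_i of M_i and let M_i^ℚ := Span_ℚ ℬ_i be its rational span. Assume σ : ℝ → ℝ is continuous. Then ρ(N(M_1, …, M_d)) = ρ(N(M_1^ℚ, …, M_d^ℚ)); in particular, the separation relation of the rational neural space does not depend on the choice of the bases ℬ_1, …, ℬ_d. -/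
open scoped BigOperators

section RationalAux

open Set

private lemma actR_continuous {Z : Type} {σ : ℝ → ℝ} (hσ : Continuous σ) :
    Continuous (act σ (Z := Z)) :=
  continuous_pi fun z => hσ.comp (continuous_apply z)

/-- Continuity of chain evaluation in the coefficients of each layer. -/
private lemma chainEval_cont (σ : ℝ → ℝ) (hσ : Continuous σ) :
    ∀ (d : ℕ) (Y : Fin (d + 2) → Type)
      (n : Fin (d + 1) → ℕ)
      (b : ∀ i : Fin (d + 1), Fin (n i) → ((Y i.castSucc → ℝ) → (Y i.succ → ℝ)))
      (_hb : ∀ i j, Continuous (b i j)) (α : Y 0 → ℝ),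
      Continuous (fun c : ∀ i, Fin (n i) → ℝ =>
        chainEval σ d Y (fun i v => ∑ j, c i j • b i j v) α)
  | 0, Y, n, b, hb, α => by
      simp only [chainEval]
      exact continuous_finset_sum _ fun j _ =>
        by fun_prop
  | (d + 1), Y, n, b, hb, α => by
      simp only [chainEval]
      have hr : Continuous (fun c : ∀ i, Fin (n i) → ℝ =>
          (fun i : Fin (d + 1) => c i.castSucc)) :=
        continuous_pi fun i => continuous_apply _
      have hprev := (chainEval_cont σ hσ d (fun i : Fin (d + 2) => Y i.castSucc)
          (fun i => n i.castSucc) (fun i => b i.castSucc)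
          (fun i j => hb i.castSucc j) α).comp hr
      exact continuous_finset_sum _ fun j _ =>
        ((continuous_apply j).comp (continuous_apply (Fin.last (d + 1)))).smul
          ((hb (Fin.last (d + 1)) j).comp ((actR_continuous hσ).comp hprev))

/-- Every element of a layer space is a continuous map (on a finite-dimensional domain). -/
private lemma layer_mem_continuous {G : Type} [Group G] {Y Z : Type} [Fintype Y]
    [MulAction G Y] [MulAction G Z] {M : Set ((Y → ℝ) → (Z → ℝ))}
    (hM : IsLayerSpace G M) {f : (Y → ℝ) → (Z → ℝ)} (hf : f ∈ M) : Continuous f := by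
  obtain ⟨k, φ, -, hMeq⟩ := hM
  rw [hMeq] at hf
  obtain ⟨c, bias, -, hfv⟩ := hf
  have hfe : f = fun v => (∑ i, c i • φ i v) + bias := funext hfv
  rw [hfe]
  exact (continuous_finset_sum _ fun i _ =>
    ((φ i).continuous_of_finiteDimensional).const_smul (c i)).add continuous_const

end RationalAux

/-- Lemma `lemma:rational_neural_spaces`: if `ℬ_i = (b i)` is a basis of
the layer space `M_i` (a real vector space of affine maps) and `M_i^ℚ = Span_ℚ ℬ_i`, then
for continuous `σ` the neural spaces have the same separation relation:
`ρ(N(M₀, …, M_d)) = ρ(N(M₀^ℚ, …, M_d^ℚ))`. -/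
theorem sepRel_rational_neural_space
    {G : Type} [Group G] [Fintype G]
    {d : ℕ} {Y : Fin (d + 2) → Type} [∀ i, Fintype (Y i)] [∀ i, MulAction G (Y i)]
    (M : ∀ i : Fin (d + 1), Set ((Y i.castSucc → ℝ) → (Y i.succ → ℝ)))
    (hM : ∀ i, IsLayerSpace G (M i))
    (n : Fin (d + 1) → ℕ)
    (b : ∀ i : Fin (d + 1), Fin (n i) → ((Y i.castSucc → ℝ) → (Y i.succ → ℝ)))
    (hbind : ∀ i, LinearIndependent ℝ (b i))
    (hbspan : ∀ i, M i = ↑(Submodule.span ℝ (Set.range (b i))))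
    (σ : ℝ → ℝ) (hσ : Continuous σ) :
    sepRel (NeuralSpace σ d Y M)
      = sepRel (NeuralSpace σ d Y
          (fun i => ↑(Submodule.span ℚ (Set.range (b i))))) := by
  classical
  -- rational span is contained in the real span, i.e. in M
  have hsub : ∀ i, (↑(Submodule.span ℚ (Set.range (b i))) :
      Set ((Y i.castSucc → ℝ) → (Y i.succ → ℝ))) ⊆ M i := by
    intro i f hf
    rw [hbspan i]
    exact Submodule.span_subset_span ℚ ℝ _ hf
  -- each basis element is continuous
  have hbcont : ∀ i j, Continuous (b i j) := by
    intro i j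
    refine layer_mem_continuous (G := G) (hM i) ?_
    rw [hbspan i]
    exact Submodule.subset_span (Set.mem_range_self j)
  apply Set.Subset.antisymm
  · -- N(Mℚ) ⊆ N(M), hence sepRel N(M) ⊆ sepRel N(Mℚ)
    rintro ⟨α, β⟩ hp f ⟨φ, hφ, rfl⟩
    exact hp _ ⟨φ, fun i => hsub i (hφ i), rfl⟩
  · rintro ⟨α, β⟩ hp f ⟨φ, hφ, rfl⟩
    -- write each layer in coordinates
    have hc : ∀ i, ∃ c : Fin (n i) → ℝ, ∑ j, c j • b i j = φ i := by
      intro i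
      have : φ i ∈ Submodule.span ℝ (Set.range (b i)) := by
        have := hφ i; rwa [hbspan i] at this
      exact (Submodule.mem_span_range_iff_exists_fun ℝ).mp this
    choose c hc using hc
    have hφeq : φ = fun i v => ∑ j, c i j • b i j v := by
      funext i v
      rw [← hc i]
      simp [Finset.sum_apply]
    -- the two evaluation maps, as functions of the coefficients
    set Fα : (∀ i, Fin (n i) → ℝ) → (Y (Fin.last (d + 1)) → ℝ) :=
      fun c' => chainEval σ d Y (fun i v => ∑ j, c' i j • b i j v) α with hFα
    set Fβ : (∀ i, Fin (n i) → ℝ) → (Y (Fin.last (d + 1)) → ℝ) :=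
      fun c' => chainEval σ d Y (fun i v => ∑ j, c' i j • b i j v) β with hFβ
    have hcontα : Continuous Fα := chainEval_cont σ hσ d Y n b hbcont α
    have hcontβ : Continuous Fβ := chainEval_cont σ hσ d Y n b hbcont β
    -- rational coefficient tuples are dense
    have hdense : Dense (Set.pi Set.univ fun i : Fin (d + 1) =>
        (Set.pi Set.univ fun _ : Fin (n i) => Set.range ((↑) : ℚ → ℝ))) := by
      refine dense_pi Set.univ fun i _ => dense_pi Set.univ fun j _ => ?_
      exact Rat.denseRange_cast
    -- on rational tuples, the two evaluations agree
    have heqon : Set.EqOn Fα Fβ (Set.pi Set.univ fun i : Fin (d + 1) =>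
        (Set.pi Set.univ fun _ : Fin (n i) => Set.range ((↑) : ℚ → ℝ))) := by
      intro c' hc'
      have hq : ∀ i j, ∃ q : ℚ, (q : ℝ) = c' i j := by
        intro i j
        exact hc' i (Set.mem_univ i) j (Set.mem_univ j)
      choose q hq using hq
      have hmem : ∀ i, (fun v => ∑ j, c' i j • b i j v) ∈
          (↑(Submodule.span ℚ (Set.range (b i))) :
            Set ((Y i.castSucc → ℝ) → (Y i.succ → ℝ))) := by
        intro i
        have he : (fun v => ∑ j, c' i j • b i j v) = ∑ j, q i j • b i j := by
          funext v z
          simp only [Finset.sum_apply, Pi.smul_apply, Rat.smul_def, smul_eq_mul]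
          refine Finset.sum_congr rfl fun j _ => ?_
          rw [hq i j]
        rw [he]
        exact Submodule.sum_mem _ fun j _ =>
          Submodule.smul_mem _ _ (Submodule.subset_span (Set.mem_range_self j))
      exact hp _ ⟨fun i v => ∑ j, c' i j • b i j v, hmem, rfl⟩
    have heq : Fα = Fβ := Continuous.ext_on hdense hcontα hcontβ heqon
    rw [hφeq]
    exact congrFun heq c
end

section
/- Let V = ℝ^d with its usual topology, let ρ be a closed equivalence relation on V, and let {f_n}_{n∈ℕ} be a family of continuous maps f_n : V → ℝ^m whose separation relation equals ρ, i.e. ρ({f_n}_{n∈ℕ}) = ρ. Then for every h ∈ C_ρ(V), every compact set K ⊆ V, and every ε > 0, there exist n ∈ ℕ and a continuous function A : (ℝ^m)^n → ℝ such that sup_{x ∈ K} |A(f_1(x), …, f_n(x)) − h(x)| < ε. Equivalently, the set ∪_{n≥1} { A ∘ (f_1, …, f_n) : A ∈ C((ℝ^m)^n, ℝ) } is dense in C_ρ(V) in the topology of uniform convergence on compact sets. -/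
open scoped BigOperators

/-- Lemma `lemma:discrete_separability`: let `ρ` be a closed equivalence
relation on `V = ℝ^d` and `{f_n}` a countable family of continuous maps `V → ℝ^m` with
`ρ({f_n}) = ρ`.  Then every `h ∈ C_ρ(V)` can be uniformly approximated on every compact set
by functions of the form `A ∘ (f_0, …, f_{n-1})` with `A` continuous. -/
theorem discrete_separability_dense
    (d m : ℕ) (ρ : Set ((Fin d → ℝ) × (Fin d → ℝ)))
    (hρclosed : IsClosed ρ)
    (hρrefl : ∀ x, (x, x) ∈ ρ)
    (hρsymm : ∀ x y, (x, y) ∈ ρ → (y, x) ∈ ρ)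
    (hρtrans : ∀ x y z, (x, y) ∈ ρ → (y, z) ∈ ρ → (x, z) ∈ ρ)
    (f : ℕ → ((Fin d → ℝ) → (Fin m → ℝ))) (hf : ∀ n, Continuous (f n))
    (hsep : sepRel (Set.range f) = ρ)
    (h : (Fin d → ℝ) → ℝ) (hh : Continuous h) (hhρ : ∀ p ∈ ρ, h p.1 = h p.2)
    (K : Set (Fin d → ℝ)) (hK : IsCompact K) (ε : ℝ) (hε : 0 < ε) :
    ∃ (n : ℕ) (A : (Fin n → (Fin m → ℝ)) → ℝ), Continuous A ∧
      ∀ x ∈ K, |A (fun i => f i x) - h x| < ε := by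
  classical
  rcases K.eq_empty_or_nonempty with hKe | hKne
  · exact ⟨0, fun _ => 0, continuous_const, by simp [hKe]⟩
  set ε' := ε / 2 with hε'def
  have hε'pos : 0 < ε' := by positivity
  -- Step 1: uniform separation claim on K
  have claim : ∃ n : ℕ, ∃ δ : ℝ, 0 < δ ∧
      ∀ x ∈ K, ∀ y ∈ K, (∀ i : Fin n, dist (f i x) (f i y) ≤ δ) → |h x - h y| < ε' := by
    by_contra hc
    push_neg at hc
    choose x hx y hy hfd hhd using fun n : ℕ =>
      hc n (1 / (n + 1)) (by positivity)
    obtain ⟨p, hpmem, φ, hφ, hconv⟩ :=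
      (hK.prod hK).tendsto_subseq (x := fun n => (x n, y n)) (fun n => ⟨hx n, hy n⟩)
    have hx1 : Filter.Tendsto (fun k => x (φ k)) Filter.atTop (nhds p.1) :=
      ((continuous_fst.tendsto p).comp hconv)
    have hy1 : Filter.Tendsto (fun k => y (φ k)) Filter.atTop (nhds p.2) :=
      ((continuous_snd.tendsto p).comp hconv)
    -- p is separated by no f i
    have hfp : ∀ i : ℕ, f i p.1 = f i p.2 := by
      intro i
      have hdist : Filter.Tendsto
          (fun k => dist (f i (x (φ k))) (f i (y (φ k)))) Filter.atTop
          (nhds (dist (f i p.1) (f i p.2))) :=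
        (((hf i).tendsto p.1).comp hx1).dist (((hf i).tendsto p.2).comp hy1)
      have hbound : ∀ᶠ k in Filter.atTop,
          dist (f i (x (φ k))) (f i (y (φ k))) ≤ 1 / (k + 1) := by
        filter_upwards [Filter.eventually_ge_atTop (i + 1)] with k hk
        have hik : i < φ k := lt_of_lt_of_le (Nat.lt_of_lt_of_le (Nat.lt_succ_self i) hk)
          (hφ.le_apply)
        have := hfd (φ k) ⟨i, hik⟩
        refine this.trans ?_
        have h1 : (k : ℝ) + 1 ≤ (φ k : ℝ) + 1 := by
          have hk' : k ≤ φ k := hφ.le_apply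
          have : (k:ℝ) ≤ (φ k : ℝ) := Nat.cast_le.mpr hk'
          linarith
        exact one_div_le_one_div_of_le (by positivity) h1
      have hzero : Filter.Tendsto (fun k : ℕ => 1 / ((k : ℝ) + 1)) Filter.atTop (nhds 0) :=
        tendsto_one_div_add_atTop_nhds_zero_nat
      have hle : dist (f i p.1) (f i p.2) ≤ 0 :=
        le_of_tendsto_of_tendsto hdist hzero hbound
      exact dist_le_zero.mp hle
    have hpρ : (p.1, p.2) ∈ ρ := by
      rw [← hsep]
      rintro g ⟨i, rfl⟩
      exact hfp i
    have hhp : h p.1 = h p.2 := hhρ _ hpρ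
    have habs : Filter.Tendsto (fun k => |h (x (φ k)) - h (y (φ k))|) Filter.atTop
        (nhds |h p.1 - h p.2|) := by
      have := ((hh.tendsto p.1).comp hx1).sub ((hh.tendsto p.2).comp hy1)
      exact this.abs
    have : ε' ≤ |h p.1 - h p.2| := ge_of_tendsto' habs (fun k => hhd (φ k))
    rw [hhp] at this
    simp at this
    linarith
  obtain ⟨n, δ, hδ, hclaim⟩ := claim
  -- Step 2: bound on h over K
  obtain ⟨C, hC⟩ := hK.exists_bound_of_continuousOn hh.continuousOn
  obtain ⟨x₀, hx₀⟩ := hKne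
  have hC0 : 0 ≤ C := le_trans (norm_nonneg (h x₀)) (hC x₀ hx₀)
  set L := 2 * C / δ with hLdef
  have hL0 : 0 ≤ L := by positivity
  have hLδ : L * δ = 2 * C := div_mul_cancel₀ _ (ne_of_gt hδ)
  set G : (Fin d → ℝ) → (Fin n → Fin m → ℝ) := fun z i => f i z with hGdef
  haveI : Nonempty K := ⟨⟨x₀, hx₀⟩⟩
  set A : (Fin n → Fin m → ℝ) → ℝ := fun w => ⨅ z : K, (h z + L * dist w (G z)) with hAdef
  have hbdd : ∀ w, BddBelow (Set.range fun z : K => h z + L * dist w (G z)) := by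
    intro w
    refine ⟨-C, ?_⟩
    rintro r ⟨z, rfl⟩
    have h1 : -C ≤ h z := by
      have := hC z z.2
      rw [Real.norm_eq_abs] at this
      linarith [abs_le.mp this]
    have h2 : 0 ≤ L * dist w (G z) := mul_nonneg hL0 dist_nonneg
    simp only
    linarith
  have key : ∀ w w', A w ≤ A w' + L * dist w w' := by
    intro w w'
    have h1 : A w - L * dist w w' ≤ ⨅ z : K, (h z + L * dist w' (G z)) := by
      refine le_ciInf fun z => ?_
      have h2 : A w ≤ h z + L * dist w (G z) := ciInf_le (hbdd w) z
      have h3 : dist w (G z) ≤ dist w w' + dist w' (G z) := dist_triangle _ _ _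
      have h4 : L * dist w (G z) ≤ L * (dist w w' + dist w' (G z)) :=
        mul_le_mul_of_nonneg_left h3 hL0
      have h5 : L * (dist w w' + dist w' (G z)) = L * dist w w' + L * dist w' (G z) := by ring
      linarith
    linarith [h1]
  have hAcont : Continuous A := by
    have hlip : LipschitzWith (Real.toNNReal L) A := by
      refine LipschitzWith.of_dist_le_mul fun w w' => ?_
      rw [Real.dist_eq, Real.coe_toNNReal L hL0]
      have k1 := key w w'
      have k2 := key w' w
      rw [dist_comm w' w] at k2
      rw [abs_sub_le_iff]
      constructor <;> linarith
    exact hlip.continuous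
  refine ⟨n, A, hAcont, fun z hz => ?_⟩
  have hupper : A (G z) ≤ h z := by
    have := ciInf_le (hbdd (G z)) (⟨z, hz⟩ : K)
    simpa using this
  have hlower : h z - ε' ≤ A (G z) := by
    refine le_ciInf fun w => ?_
    have hw := w.2
    rcases le_or_gt (dist (G z) (G w.1)) δ with hd | hd
    · have coord : ∀ i : Fin n, dist (f i z) (f i w.1) ≤ δ := fun i =>
        le_trans (dist_le_pi_dist (G z) (G w.1) i) hd
      have hlt := hclaim z hz w.1 hw coord
      have h2 : 0 ≤ L * dist (G z) (G w.1) := mul_nonneg hL0 dist_nonneg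
      have hab := abs_lt.mp hlt
      linarith [hab.1, hab.2]
    · have h1 : L * δ ≤ L * dist (G z) (G w.1) := mul_le_mul_of_nonneg_left hd.le hL0
      have h2 : |h z| ≤ C := by have := hC z hz; rwa [Real.norm_eq_abs] at this
      have h3 : |h w.1| ≤ C := by have := hC w.1 hw; rwa [Real.norm_eq_abs] at this
      have h4 := abs_le.mp h2
      have h5 := abs_le.mp h3
      rw [hLδ] at h1
      linarith
  have hGz : (fun i : Fin n => f i z) = G z := rfl
  rw [hGz]
  have : |A (G z) - h z| ≤ ε' := abs_le.mpr ⟨by linarith, by linarith⟩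
  calc |A (G z) - h z| ≤ ε' := this
    _ < ε := by rw [hε'def]; linarith
end

section
/- Let n ≥ 1, let S_n act on ℝ^n by permuting coordinates, let C = { v ↦ x·v + y𝟙 : x, y ∈ ℝ } ⊆ Aff_{S_n}(ℝ^n, ℝ^n) be the width-1 convolutional layer space and P = { v ↦ (x_1 Id + x_2 𝟙𝟙ᵀ)v + y𝟙 : x_1, x_2, y ∈ ℝ } ⊆ Aff_{S_n}(ℝ^n, ℝ^n) the PointNet (DeepSets) layer space, where 𝟙 = (1,…,1)ᵀ. Assume σ : ℝ → ℝ is continuous and not a polynomial. Then the family of first-coordinate projections of U(C, P, C) separates the orbits of Stab_{S_n}(1) := {g ∈ S_n : g(1) = 1} on ℝ^n: whenever α, β ∈ ℝ^n lie in distinct Stab_{S_n}(1)-orbits (i.e. there is no permutation g fixing 1 with gα = β), there exists f ∈ U(C, P, C) with π_1(f(α)) ≠ π_1(f(β)), where π_1 is the projection onto the first coordinate. -/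
open scoped BigOperators

section AuxUCPC
open Polynomial MeasureTheory Finset Filter
open scoped ContDiff Convolution

noncomputable section


lemma iteratedDeriv_zero_fun (r : ℕ) : iteratedDeriv r (fun _ : ℝ => (0:ℝ)) = fun _ => (0:ℝ) := by
  induction r with
  | zero => simp [iteratedDeriv_zero]
  | succ r ih => rw [iteratedDeriv_succ, ih]; funext x; simp

lemma iteratedDeriv_cmul (a : ℝ) {f : ℝ → ℝ} (hf : ContDiff ℝ ∞ f) (r : ℕ) :
    iteratedDeriv r (fun y => a * f y) = fun x => a * iteratedDeriv r f x := by
  induction r with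
  | zero => simp [iteratedDeriv_zero]
  | succ r ih =>
    rw [iteratedDeriv_succ, ih, iteratedDeriv_succ]
    funext x
    exact deriv_const_mul a
      ((hf.differentiable_iteratedDeriv r (by exact_mod_cast WithTop.coe_lt_top r)).differentiableAt)

lemma iteratedDeriv_addf {f g : ℝ → ℝ} (hf : ContDiff ℝ ∞ f) (hg : ContDiff ℝ ∞ g) (r : ℕ)
    (x : ℝ) :
    iteratedDeriv r (fun y => f y + g y) x = iteratedDeriv r f x + iteratedDeriv r g x := by
  have h2 : (fun y => f y + g y) = f + g := rfl
  rw [h2]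
  have hf' : ContDiffOn ℝ r f Set.univ := (hf.of_le (by exact_mod_cast le_top)).contDiffOn
  have hg' : ContDiffOn ℝ r g Set.univ := (hg.of_le (by exact_mod_cast le_top)).contDiffOn
  have := iteratedDerivWithin_add (Set.mem_univ x) uniqueDiffOn_univ (hf' x (Set.mem_univ x)) (hg' x (Set.mem_univ x))
  simpa [iteratedDerivWithin_univ] using this

lemma iteratedDeriv_fsum {ι : Type*} (s : Finset ι) (f : ι → ℝ → ℝ)
    (hf : ∀ i ∈ s, ContDiff ℝ ∞ (f i)) (r : ℕ) (x : ℝ) :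
    iteratedDeriv r (fun y => ∑ i ∈ s, f i y) x = ∑ i ∈ s, iteratedDeriv r (f i) x := by
  classical
  induction s using Finset.induction_on with
  | empty => simp [iteratedDeriv_zero_fun]
  | insert a s hnm ih =>
    simp only [Finset.sum_insert hnm]
    rw [iteratedDeriv_addf (hf a (Finset.mem_insert_self a s))
      (ContDiff.sum fun i hi => hf i (Finset.mem_insert_of_mem hi)) r x,
      ih (fun i hi => hf i (Finset.mem_insert_of_mem hi))]

lemma exists_antideriv (q : Polynomial ℝ) :
    ∃ Q : Polynomial ℝ, Q.derivative = q ∧ Q.natDegree ≤ q.natDegree + 1 := by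
  refine ⟨q.sum fun i a => C (a / (i+1)) * X ^ (i+1), ?_, ?_⟩
  · rw [Polynomial.sum_def, map_sum]
    rw [Finset.sum_congr rfl (fun i _ => Polynomial.derivative_C_mul_X_pow _ _)]
    have h : ∀ i ∈ q.support,
        C (q.coeff i / ((i:ℝ)+1) * ((i+1 : ℕ) : ℝ)) * X ^ (i+1-1) = C (q.coeff i) * X ^ i := by
      intro i _
      have hne : ((i:ℝ)+1) ≠ 0 := by positivity
      rw [Nat.add_sub_cancel]
      congr 1
      rw [Nat.cast_add, Nat.cast_one, div_mul_cancel₀ _ hne]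
    rw [Finset.sum_congr rfl h]
    conv_rhs => rw [← Polynomial.sum_C_mul_X_pow_eq q]
    rw [Polynomial.sum_def]
  · rw [Polynomial.sum_def]
    apply Polynomial.natDegree_sum_le_of_forall_le
    intro i hi
    have h1 : (C (q.coeff i / ((i:ℝ)+1)) * X ^ (i+1)).natDegree ≤ 0 + (i+1) :=
      natDegree_mul_le.trans (by simp)
    have h2 := Polynomial.le_natDegree_of_mem_supp i hi
    omega

lemma poly_of_iteratedDeriv_eq_zero : ∀ (r : ℕ) (G : ℝ → ℝ), ContDiff ℝ ∞ G →
    (∀ x, iteratedDeriv r G x = 0) → ∃ p : Polynomial ℝ, p.natDegree ≤ r ∧ ∀ x, G x = p.eval x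
  | 0, G, _, h => ⟨0, le_rfl, fun x => by simpa using h x⟩
  | (r+1), G, hG, h => by
    have hG' : ContDiff ℝ ∞ (deriv G) := (contDiff_infty_iff_deriv.mp hG).2
    have h' : ∀ x, iteratedDeriv r (deriv G) x = 0 := fun x => by
      rw [← iteratedDeriv_succ']; exact h x
    obtain ⟨q, hq, hqe⟩ := poly_of_iteratedDeriv_eq_zero r (deriv G) hG' h'
    obtain ⟨Q, hQd, hQdeg⟩ := exists_antideriv q
    have hdiffG : Differentiable ℝ G := hG.differentiable (by simp)
    have hd : ∀ x, deriv (fun y => G y - Q.eval y) x = 0 := by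
      intro x
      rw [deriv_fun_sub (hdiffG x) (Q.differentiable x)]
      rw [Polynomial.deriv, hQd, ← hqe x, sub_self]
    have hconst := is_const_of_deriv_eq_zero (hdiffG.sub Q.differentiable) hd
    refine ⟨Q + C (G 0 - Q.eval 0), ?_, ?_⟩
    · refine (Polynomial.natDegree_add_le _ _).trans ?_
      simp only [Polynomial.natDegree_C]
      omega
    · intro x
      have h3 := hconst x 0
      simp only [Polynomial.eval_add, Polynomial.eval_C]
      simp only [Pi.sub_apply] at h3
      linarith

lemma exists_powsum_ne (T : Finset ℝ) (c : ℝ → ℝ) {t₀ : ℝ} (ht₀ : t₀ ∈ T) (hc : c t₀ ≠ 0) :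
    ∃ r < T.card, ∑ t ∈ T, c t * t ^ r ≠ 0 := by
  by_contra hcon
  push_neg at hcon
  have hp : ∀ p : Polynomial ℝ, p.natDegree < T.card → ∑ t ∈ T, c t * p.eval t = 0 := by
    intro p hdeg
    have heval : ∀ t : ℝ, p.eval t = ∑ r ∈ Finset.range T.card, p.coeff r * t ^ r :=
      fun t => Polynomial.eval_eq_sum_range' hdeg t
    calc ∑ t ∈ T, c t * p.eval t
        = ∑ t ∈ T, ∑ r ∈ Finset.range T.card, p.coeff r * (c t * t ^ r) := by
          refine Finset.sum_congr rfl fun t _ => ?_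
          rw [heval t, Finset.mul_sum]
          exact Finset.sum_congr rfl fun r _ => by ring
      _ = ∑ r ∈ Finset.range T.card, p.coeff r * ∑ t ∈ T, c t * t ^ r := by
          rw [Finset.sum_comm]
          exact Finset.sum_congr rfl fun r _ => (Finset.mul_sum _ _ _).symm
      _ = 0 := by
          refine Finset.sum_eq_zero fun r hr => ?_
          rw [hcon r (Finset.mem_range.mp hr), mul_zero]
  set p : Polynomial ℝ := ∏ s ∈ T.erase t₀, (X - C s) with hp'
  have hmonic : ∀ s ∈ T.erase t₀, (X - C s).Monic := fun s _ => monic_X_sub_C s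
  have hdeg : p.natDegree < T.card := by
    rw [hp', Polynomial.natDegree_prod_of_monic _ _ hmonic]
    simp only [Polynomial.natDegree_X_sub_C, Finset.sum_const, smul_eq_mul, mul_one]
    have := Finset.card_erase_of_mem ht₀
    have hpos : 0 < T.card := Finset.card_pos.mpr ⟨t₀, ht₀⟩
    omega
  have h0 := hp p hdeg
  have hsingle : ∑ t ∈ T, c t * p.eval t = c t₀ * p.eval t₀ := by
    refine Finset.sum_eq_single_of_mem t₀ ht₀ fun t ht hne => ?_
    have : p.eval t = 0 := by
      rw [hp', Polynomial.eval_prod]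
      exact Finset.prod_eq_zero (Finset.mem_erase.mpr ⟨hne, ht⟩) (by simp)
    rw [this, mul_zero]
  have hne0 : p.eval t₀ ≠ 0 := by
    rw [hp', Polynomial.eval_prod]
    refine Finset.prod_ne_zero_iff.mpr fun s hs => ?_
    have := (Finset.mem_erase.mp hs).1
    simp only [Polynomial.eval_sub, Polynomial.eval_X, Polynomial.eval_C, sub_ne_zero]
    exact fun h => this h.symm
  rw [hsingle] at h0
  exact hc (by
    rcases mul_eq_zero.mp h0 with h | h
    · exact h
    · exact absurd h hne0)
lemma key_poly (σ : ℝ → ℝ) (hσc : Continuous σ) (T : Finset ℝ) (c : ℝ → ℝ)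
    (hrel : ∀ A B : ℝ, ∑ t ∈ T, c t * σ (A * t + B) = 0)
    {t₀ : ℝ} (ht₀ : t₀ ∈ T) (hc0 : c t₀ ≠ 0) :
    ∃ p : Polynomial ℝ, ∀ x : ℝ, σ x = Polynomial.eval x p := by
  obtain ⟨r, hrlt, hps⟩ := exists_powsum_ne T c ht₀ hc0
  -- mollifiers
  set ψ : ℕ → ContDiffBump (0:ℝ) := fun k =>
    ⟨1/(2*(k+1)), 1/(k+1), by positivity, by
      rw [div_lt_div_iff₀ (by positivity) (by positivity)]
      nlinarith [Nat.cast_nonneg (α := ℝ) k]⟩ with hψ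
  set g : ℕ → ℝ → ℝ := fun k =>
    ((ψ k).normed volume) ⋆[ContinuousLinearMap.lsmul ℝ ℝ, volume] σ with hg
  have hgsm : ∀ k, ContDiff ℝ ∞ (g k) := fun k =>
    HasCompactSupport.contDiff_convolution_left _ (ψ k).hasCompactSupport_normed
      (ψ k).contDiff_normed (hσc.locallyIntegrable)
  have hgdef : ∀ k x, g k x = ∫ y, (ψ k).normed volume y • σ (x - y) := fun k x => by
    rw [hg]; exact convolution_lsmul
  have hint : ∀ k (x : ℝ), Integrable (fun y => (ψ k).normed volume y • σ (x - y)) volume := by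
    intro k x
    refine Continuous.integrable_of_hasCompactSupport ?_ ?_
    · exact ((ψ k).continuous_normed).smul (hσc.comp (continuous_const.sub continuous_id))
    · exact (ψ k).hasCompactSupport_normed.smul_right
  have hgrel : ∀ k A B, ∑ t ∈ T, c t * g k (A * t + B) = 0 := by
    intro k A B
    have h1 : ∀ t : ℝ, c t * g k (A * t + B)
        = ∫ y, c t • ((ψ k).normed volume y • σ (A * t + B - y)) := by
      intro t
      rw [hgdef k (A * t + B), integral_smul, smul_eq_mul]
    rw [Finset.sum_congr rfl fun t _ => h1 t,
      ← integral_finset_sum T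
        (f := fun t y => c t • ((ψ k).normed volume y • σ (A * t + B - y)))
        (fun t _ => (hint k (A * t + B)).smul (c t))]
    have h2 : ∀ y : ℝ, ∑ t ∈ T, c t • ((ψ k).normed volume y • σ (A * t + B - y))
        = (ψ k).normed volume y * ∑ t ∈ T, c t * σ (A * t + (B - y)) := by
      intro y
      rw [Finset.mul_sum]
      refine Finset.sum_congr rfl fun t _ => ?_
      have : A * t + B - y = A * t + (B - y) := by ring
      rw [this]; simp [smul_eq_mul]; ring
    simp only [h2, hrel, mul_zero, integral_zero]
  -- derivative identity
  have hDzero : ∀ k B, iteratedDeriv r (g k) B = 0 := by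
    intro k B
    have hterm : ∀ t : ℝ, ContDiff ℝ ∞ (fun A : ℝ => c t * g k (A * t + B)) := by
      intro t
      exact (contDiff_const).mul ((hgsm k).comp
        ((contDiff_id.mul contDiff_const).add contDiff_const))
    have h1 : (fun A : ℝ => ∑ t ∈ T, c t * g k (A * t + B)) = fun _ => (0:ℝ) :=
      funext fun A => hgrel k A B
    have h2 : iteratedDeriv r (fun A : ℝ => ∑ t ∈ T, c t * g k (A * t + B)) 0
        = ∑ t ∈ T, c t * (t ^ r * iteratedDeriv r (g k) B) := by
      rw [iteratedDeriv_fsum T _ (fun t _ => hterm t) r 0]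
      refine Finset.sum_congr rfl fun t _ => ?_
      have hsm : ContDiff ℝ ∞ (fun A : ℝ => g k (A * t + B)) :=
        (hgsm k).comp ((contDiff_id.mul contDiff_const).add contDiff_const)
      rw [iteratedDeriv_cmul (c t) hsm r]
      show c t * iteratedDeriv r (fun A : ℝ => g k (A * t + B)) 0 = _
      congr 1
      have hrw : (fun A : ℝ => g k (A * t + B)) = fun A : ℝ => (fun z => g k (z + B)) (t * A) := by
        funext A; rw [mul_comm]
      have hsm2 : ContDiff ℝ (r : ℕ) (fun z : ℝ => g k (z + B)) :=
        ((hgsm k).of_le (by exact_mod_cast le_top)).comp (contDiff_id.add contDiff_const)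
      rw [hrw, iteratedDeriv_comp_const_mul hsm2 t, iteratedDeriv_comp_add_const r (g k) B]
      simp
    rw [h1, iteratedDeriv_zero_fun, Finset.sum_congr rfl
      (fun t _ => by rw [← mul_assoc] : ∀ t ∈ T, c t * (t ^ r * iteratedDeriv r (g k) B)
        = c t * t ^ r * iteratedDeriv r (g k) B)] at h2
    rw [← Finset.sum_mul] at h2
    have := h2.symm
    rcases mul_eq_zero.mp this with h | h
    · exact absurd h hps
    · exact h
  -- each g k is a polynomial of degree ≤ r
  have hpk : ∀ k, ∃ p : Polynomial ℝ, p.natDegree ≤ r ∧ ∀ x, g k x = p.eval x :=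
    fun k => poly_of_iteratedDeriv_eq_zero r (g k) (hgsm k) (hDzero k)
  choose pk hpkdeg hpke using hpk
  -- Lagrange interpolation
  set s : Finset ℕ := Finset.range (r+1) with hs
  have hvs : Set.InjOn (fun i : ℕ => (i : ℝ)) s := fun a _ b _ h => Nat.cast_injective h
  have hcard : s.card = r + 1 := Finset.card_range (r+1)
  have heval : ∀ (w : ℕ → ℝ) (x : ℝ),
      Polynomial.eval x (Lagrange.interpolate s (fun i : ℕ => (i:ℝ)) w)
        = ∑ i ∈ s, w i * Polynomial.eval x (Lagrange.basis s (fun i : ℕ => (i:ℝ)) i) := by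
    intro w x
    rw [Lagrange.interpolate_apply, Polynomial.eval_finset_sum]
    exact Finset.sum_congr rfl fun i _ => by rw [Polynomial.eval_mul, Polynomial.eval_C]
  have hintp : ∀ k (x : ℝ), g k x
      = ∑ i ∈ s, g k (i : ℝ) * Polynomial.eval x (Lagrange.basis s (fun i : ℕ => (i:ℝ)) i) := by
    intro k x
    have hdlt : (pk k).degree < s.card := by
      refine Polynomial.degree_le_natDegree.trans_lt ?_
      rw [hcard]
      exact_mod_cast Nat.lt_succ_of_le (hpkdeg k)
    have := Lagrange.eq_interpolate hvs hdlt
    calc g k x = Polynomial.eval x (pk k) := hpke k x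
      _ = Polynomial.eval x (Lagrange.interpolate s (fun i : ℕ => (i:ℝ))
            (fun i => Polynomial.eval (i:ℝ) (pk k))) := by rw [← this]
      _ = ∑ i ∈ s, g k (i:ℝ) * Polynomial.eval x (Lagrange.basis s (fun i : ℕ => (i:ℝ)) i) := by
          rw [heval]
          exact Finset.sum_congr rfl fun i _ => by rw [hpke k (i:ℝ)]
  -- convergence
  have hconv : ∀ x : ℝ, Tendsto (fun k => g k x) atTop (nhds (σ x)) := by
    intro x
    refine ContDiffBump.convolution_tendsto_right_of_continuous ?_ hσc x
    have : (fun k : ℕ => (ψ k).rOut) = fun k : ℕ => 1 / ((k : ℝ) + 1) := rfl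
    rw [this]
    exact tendsto_one_div_add_atTop_nhds_zero_nat
  refine ⟨Lagrange.interpolate s (fun i : ℕ => (i:ℝ)) (fun i => σ (i:ℝ)), fun x => ?_⟩
  have hlim2 : Tendsto (fun k => g k x) atTop
      (nhds (∑ i ∈ s, σ (i:ℝ) * Polynomial.eval x (Lagrange.basis s (fun i : ℕ => (i:ℝ)) i))) := by
    have : (fun k => g k x) = fun k =>
        ∑ i ∈ s, g k (i:ℝ) * Polynomial.eval x (Lagrange.basis s (fun i : ℕ => (i:ℝ)) i) :=
      funext fun k => hintp k x
    rw [this]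
    exact tendsto_finset_sum s fun i _ => (hconv (i:ℝ)).mul_const _
  rw [heval]
  exact tendsto_nhds_unique (hconv x) hlim2

lemma sigma_nonconst {σ : ℝ → ℝ} (hσp : NotPolynomial σ) : ∃ x y : ℝ, σ x ≠ σ y := by
  by_contra h
  push_neg at h
  exact hσp ⟨Polynomial.C (σ 0), fun x => by rw [h x 0]; simp⟩

lemma twoPoint {σ : ℝ → ℝ} (hσp : NotPolynomial σ) {x y : ℝ} (hxy : x ≠ y) :
    ∃ a b : ℝ, σ (a * x + b) ≠ σ (a * y + b) := by
  obtain ⟨p, q, hpq⟩ := sigma_nonconst hσp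
  have hd : y - x ≠ 0 := sub_ne_zero_of_ne (Ne.symm hxy)
  refine ⟨(q - p)/(y - x), p - (q - p)/(y - x) * x, ?_⟩
  have e1 : (q - p)/(y - x) * x + (p - (q - p)/(y - x) * x) = p := by ring
  have e2 : (q - p)/(y - x) * y + (p - (q - p)/(y - x) * x) = q := by
    field_simp
    ring
  rw [e1, e2]
  exact hpq

lemma mem_UClass3_network (n : ℕ) (σ : ℝ → ℝ) (A B a c0 b a₂ b₂ : ℝ) :
    (fun (v : Fin n → ℝ) (z : Fin n) =>
        a₂ * σ (a * σ (A * v z + B) + c0 * (∑ j, σ (A * v j + B)) + b) + b₂)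
      ∈ UClass3 σ (ConvC n) (PointNetP n) (ConvC n) := by
  have hmem : (fun (v : Fin n → ℝ) (z : Fin n) =>
        a₂ * σ (a * σ (A * v z + B) + c0 * (∑ j, σ (A * v j + B)) + b) + b₂) ∈
      { F : (Fin n → ℝ) → (Fin n → ℝ) | ∃ k₁ k₂, ∃ g ∈ layerPowIn (ConvC n) k₁,
        ∃ m ∈ layerPow (PointNetP n) k₁ k₂, ∃ f ∈ layerPowOut (ConvC n) k₂,
        F = fun v => f (act σ (m (act σ (g v)))) } := by
    refine ⟨1, 1, fun v (p : Fin 1 × Fin n) => A * v p.2 + B, ?_,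
      fun w (p : Fin 1 × Fin n) => ∑ j : Fin 1, (a * w (j, p.2) + c0 * (∑ i, w (j, i)) + b), ?_,
      fun (u : Fin 1 × Fin n → ℝ) (z : Fin n) => ∑ j : Fin 1, (a₂ * u (j, z) + b₂), ?_, ?_⟩
    · exact ⟨fun _ => fun v i => A * v i + B, fun _ => ⟨A, B, rfl⟩, fun v p => rfl⟩
    · exact ⟨fun _ _ => fun v i => a * v i + c0 * (∑ j, v j) + b,
        fun _ _ => ⟨a, c0, b, rfl⟩, fun v p => rfl⟩
    · exact ⟨fun _ => fun v i => a₂ * v i + b₂, fun _ => ⟨a₂, b₂, rfl⟩, fun v z => rfl⟩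
    · funext v z
      simp [act, Fin.sum_univ_one]
  intro K _ ε hε
  exact ⟨_, hmem, fun x _ => by rw [dist_self]; exact hε⟩

end
end AuxUCPC


/-- Lemma `lemma:stabilizer-orbits`: the first-coordinate projections of
`U(C, P, C)` separate the orbits of the stabilizer of the first coordinate in `S_n` on
`ℝ^n`: if `α, β` lie in distinct `Stab_{S_n}(1)`-orbits, then some `F ∈ U(C, P, C)`
satisfies `π₁(F(α)) ≠ π₁(F(β))`. -/
theorem UCPC_projections_separate_stabilizer_orbits
    (n : ℕ) (hn : 1 ≤ n) (σ : ℝ → ℝ) (hσc : Continuous σ) (hσp : NotPolynomial σ)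
    (α β : Fin n → ℝ)
    (horb : ¬ ∃ gp : Equiv.Perm (Fin n), gp ⟨0, hn⟩ = ⟨0, hn⟩ ∧
        (fun i => α (gp⁻¹ i)) = β) :
    ∃ F ∈ UClass3 σ (ConvC n) (PointNetP n) (ConvC n),
      F α ⟨0, hn⟩ ≠ F β ⟨0, hn⟩ := by
  classical
  set i0 : Fin n := ⟨0, hn⟩ with hi0
  by_cases h1 : ∃ A B : ℝ, σ (A * α i0 + B) ≠ σ (A * β i0 + B)
  · obtain ⟨A, B, hAB⟩ := h1
    obtain ⟨a, b, hab⟩ := twoPoint hσp hAB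
    refine ⟨_, mem_UClass3_network n σ A B a 0 b 1 0, ?_⟩
    simp only [one_mul, zero_mul, add_zero, zero_add]
    exact hab
  · by_cases h2 : ∃ A B : ℝ, (∑ i, σ (A * α i + B)) ≠ (∑ i, σ (A * β i + B))
    · obtain ⟨A, B, hAB⟩ := h2
      obtain ⟨a, b, hab⟩ := twoPoint hσp hAB
      refine ⟨_, mem_UClass3_network n σ A B 0 a b 1 0, ?_⟩
      simp only [one_mul, zero_mul, add_zero, zero_add]
      exact hab
    · exfalso
      push_neg at h1 h2
      -- first coordinates agree
      have hab0 : α i0 = β i0 := by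
        by_contra hne
        apply hσp
        have hd : β i0 - α i0 ≠ 0 := sub_ne_zero_of_ne (Ne.symm hne)
        have hconst : ∀ x y : ℝ, σ x = σ y := by
          intro x y
          have hA := h1 ((y - x)/(β i0 - α i0)) (x - (y - x)/(β i0 - α i0) * α i0)
          have e1 : (y - x)/(β i0 - α i0) * α i0 + (x - (y - x)/(β i0 - α i0) * α i0) = x := by
            ring
          have e2 : (y - x)/(β i0 - α i0) * β i0 + (x - (y - x)/(β i0 - α i0) * α i0) = y := by
            field_simp
            ring
          rw [e1, e2] at hA
          exact hA
        exact ⟨Polynomial.C (σ 0), fun x => by rw [hconst x 0]; simp⟩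
      -- counting
      set T : Finset ℝ := Finset.image α Finset.univ ∪ Finset.image β Finset.univ with hT
      have hgroup : ∀ (γ : Fin n → ℝ), Finset.image γ Finset.univ ⊆ T → ∀ A B : ℝ,
          (∑ i, σ (A * γ i + B)) = ∑ t ∈ T,
            ((Finset.univ.filter (fun i => γ i = t)).card : ℝ) * σ (A * t + B) := by
        intro γ hsub A B
        rw [← Finset.sum_fiberwise_of_maps_to (g := γ)
          (fun i _ => hsub (Finset.mem_image_of_mem γ (Finset.mem_univ i)))
          (fun i => σ (A * γ i + B))]
        refine Finset.sum_congr rfl fun t ht => ?_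
        rw [Finset.sum_congr rfl (fun i hi => by
          rw [(Finset.mem_filter.mp hi).2] :
          ∀ i ∈ Finset.univ.filter (fun i => γ i = t), σ (A * γ i + B) = σ (A * t + B))]
        rw [Finset.sum_const, nsmul_eq_mul]
      have hrel : ∀ A B : ℝ, ∑ t ∈ T,
          (((Finset.univ.filter (fun i => α i = t)).card : ℝ)
            - ((Finset.univ.filter (fun i => β i = t)).card : ℝ)) * σ (A * t + B) = 0 := by
        intro A B
        have hz := sub_eq_zero_of_eq (h2 A B)
        rw [hgroup α Finset.subset_union_left A B, hgroup β Finset.subset_union_right A B,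
          ← Finset.sum_sub_distrib] at hz
        rw [← hz]
        exact Finset.sum_congr rfl fun t _ => by ring
      have hcnt : ∀ t : ℝ, (Finset.univ.filter (fun i => α i = t)).card
          = (Finset.univ.filter (fun i => β i = t)).card := by
        intro t
        by_cases htT : t ∈ T
        · by_contra hne
          have hne' : (fun s : ℝ => ((Finset.univ.filter (fun i => α i = s)).card : ℝ)
              - ((Finset.univ.filter (fun i => β i = s)).card : ℝ)) t ≠ 0 := by
            simp only [sub_ne_zero]
            exact_mod_cast hne
          exact hσp (key_poly σ hσc T _ hrel htT hne')
        · have hA0 : (Finset.univ.filter (fun i => α i = t)) = ∅ :=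
            Finset.filter_eq_empty_iff.mpr (fun i _ hc => htT
              (Finset.mem_union_left _ (hc ▸ Finset.mem_image_of_mem α (Finset.mem_univ i))))
          have hB0 : (Finset.univ.filter (fun i => β i = t)) = ∅ :=
            Finset.filter_eq_empty_iff.mpr (fun i _ hc => htT
              (Finset.mem_union_right _ (hc ▸ Finset.mem_image_of_mem β (Finset.mem_univ i))))
          rw [hA0, hB0]
      -- build the permutation
      set f1 : Fin n → ℝ × Bool := fun i => (α i, decide (i = i0)) with hf1
      set f2 : Fin n → ℝ × Bool := fun i => (β i, decide (i = i0)) with hf2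
      have htrue : ∀ (γ : Fin n → ℝ) (t : ℝ),
          (Finset.univ.filter (fun i => γ i = t ∧ i = i0))
            = if γ i0 = t then {i0} else ∅ := by
        intro γ t
        ext i
        simp only [Finset.mem_filter, Finset.mem_univ, true_and]
        by_cases hg : γ i0 = t
        · rw [if_pos hg]
          simp only [Finset.mem_singleton]
          constructor
          · rintro ⟨-, rfl⟩; rfl
          · rintro rfl; exact ⟨hg, rfl⟩
        · rw [if_neg hg]
          simp only [Finset.notMem_empty, iff_false, not_and]
          rintro h rfl; exact hg h
      have hsplit : ∀ (γ : Fin n → ℝ) (t : ℝ),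
          (Finset.univ.filter (fun i => γ i = t ∧ i = i0)).card
            + (Finset.univ.filter (fun i => γ i = t ∧ ¬ i = i0)).card
          = (Finset.univ.filter (fun i => γ i = t)).card := by
        intro γ t
        rw [← Finset.filter_filter, ← Finset.filter_filter,
          Finset.card_filter_add_card_filter_not]
      have hcard : ∀ p : ℝ × Bool, Fintype.card {i // f1 i = p} = Fintype.card {i // f2 i = p} := by
        rintro ⟨t, bb⟩
        rw [Fintype.card_subtype, Fintype.card_subtype]
        have hpred1 : ∀ i : Fin n, f1 i = (t, bb) ↔ (α i = t ∧ decide (i = i0) = bb) := by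
          intro i; rw [hf1]; exact Prod.mk.injEq _ _ _ _ ▸ Iff.rfl
        cases bb with
        | true =>
          have e1 : (Finset.univ.filter (fun i => f1 i = (t, true)))
              = Finset.univ.filter (fun i => α i = t ∧ i = i0) := by
            refine Finset.filter_congr fun i _ => ?_
            rw [hf1]
            simp [Prod.ext_iff]
          have e2 : (Finset.univ.filter (fun i => f2 i = (t, true)))
              = Finset.univ.filter (fun i => β i = t ∧ i = i0) := by
            refine Finset.filter_congr fun i _ => ?_
            rw [hf2]
            simp [Prod.ext_iff]
          rw [e1, e2, htrue α t, htrue β t, hab0]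
        | false =>
          have e1 : (Finset.univ.filter (fun i => f1 i = (t, false)))
              = Finset.univ.filter (fun i => α i = t ∧ ¬ i = i0) := by
            refine Finset.filter_congr fun i _ => ?_
            rw [hf1]
            simp [Prod.ext_iff]
          have e2 : (Finset.univ.filter (fun i => f2 i = (t, false)))
              = Finset.univ.filter (fun i => β i = t ∧ ¬ i = i0) := by
            refine Finset.filter_congr fun i _ => ?_
            rw [hf2]
            simp [Prod.ext_iff]
          rw [e1, e2]
          have h1' := hsplit α t
          have h2' := hsplit β t
          have h3' := hcnt t
          have h4' : (Finset.univ.filter (fun i => α i = t ∧ i = i0)).card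
              = (Finset.univ.filter (fun i => β i = t ∧ i = i0)).card := by
            rw [htrue α t, htrue β t, hab0]
          omega
      have hfib : ∀ p : ℝ × Bool, Nonempty ({i // f1 i = p} ≃ {i // f2 i = p}) :=
        fun p => ⟨Fintype.equivOfCardEq (hcard p)⟩
      set e : Fin n ≃ Fin n := Equiv.ofFiberEquiv (fun p => (hfib p).some) with he
      have hmap : ∀ a, f2 (e a) = f1 a := fun a => Equiv.ofFiberEquiv_map _ a
      apply horb
      refine ⟨e, ?_, ?_⟩
      · have h2nd := congrArg Prod.snd (hmap i0)
        simp only [hf1, hf2] at h2nd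
        simpa using h2nd
      · funext i
        have h1st := congrArg Prod.fst (hmap (e.symm i))
        simp only [hf1, hf2] at h1st
        rw [Equiv.apply_symm_apply] at h1st
        show α ((e : Equiv.Perm (Fin n))⁻¹ i) = β i
        rw [show ((e : Equiv.Perm (Fin n))⁻¹ : Equiv.Perm (Fin n)) = e.symm from rfl]
        exact h1st.symm
end

section
/- Let G be a finite group acting on a finite set X with orbit decomposition X = Y_1 ⊔ … ⊔ Y_s, choose representatives x_i ∈ Y_i with stabilizers G_{x_i}, and let V be a permutation representation of G. For each i, let g_{i,1}, …, g_{i,t_i} be a transversal of G/G_{x_i} and define the reconstruction map θ_{x_i}^* : C_{G_{x_i}}(V, ℝ) → C_G(V, ℝ^X) by θ_{x_i}^*(f)(v) = Σ_{j=1}^{t_i} f(g_{i,j}^{-1} v) e_{g_{i,j} x_i}. Then C_G(V, ℝ^X) = θ_{x_1}^*(C_{G_{x_1}}(V, ℝ)) ⊕ … ⊕ θ_{x_s}^*(C_{G_{x_s}}(V, ℝ)); that is, every continuous G-equivariant map f : V → ℝ^X can be written uniquely as f = Σ_{i=1}^s θ_{x_i}^*(h_i) with h_i ∈ C_{G_{x_i}}(V,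 ℝ). -/
open scoped BigOperators

/-- Equation `eq:equiv-decomposition`: with orbit representatives
`x₀, …, x_{s-1}` of the `G`-orbits of `X` and transversals `g i` of `G/G_{x_i}`, every
continuous `G`-equivariant map `F : V → ℝ^X` is uniquely of the form
`F = ∑ᵢ θ_{x_i}^*(h_i)` with `h_i ∈ C_{G_{x_i}}(V, ℝ)`, i.e.
`C_G(V, ℝ^X) = θ_{x_1}^*(C_{G_{x_1}}(V, ℝ)) ⊕ ⋯ ⊕ θ_{x_s}^*(C_{G_{x_s}}(V, ℝ))`. -/
theorem equivariant_decomposition_via_reconstruction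
    {G : Type} [Group G] [Fintype G]
    {X : Type} [Fintype X] [MulAction G X] [DecidableEq X]
    {Y : Type} [Fintype Y] [MulAction G Y]
    (s : ℕ) (x : Fin s → X)
    (horb : ∀ z : X, ∃! i : Fin s, z ∈ MulAction.orbit G (x i))
    (t : Fin s → ℕ) (g : ∀ i : Fin s, Fin (t i) → G)
    (hg : ∀ (i : Fin s) (a : G),
      ∃! j : Fin (t i), (g i j)⁻¹ * a ∈ MulAction.stabilizer G (x i))
    (F : (Y → ℝ) → (X → ℝ)) (hFc : Continuous F) (hFe : Equivariant G F) :
    ∃! h : Fin s → ((Y → ℝ) → ℝ),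
      (∀ i, Continuous (h i) ∧
        ∀ γ ∈ MulAction.stabilizer G (x i), ∀ v, h i (pSMul γ v) = h i v) ∧
      ∀ (v : Y → ℝ) (z : X),
        F v z = ∑ i, ∑ j, (if g i j • x i = z then h i (pSMul (g i j)⁻¹ v) else 0) := by
  classical
  have pSMul_mul : ∀ (a b : G) (v : Y → ℝ), pSMul a (pSMul b v) = pSMul (a * b) v := by
    intro a b v
    funext y
    simp [pSMul, mul_smul, mul_inv_rev]
  -- collapse of the double sum to the unique pair
  have key : ∀ (z : X) (f : ∀ i : Fin s, Fin (t i) → ℝ),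
      ∃ (i₀ : Fin s) (j₀ : Fin (t i₀)), g i₀ j₀ • x i₀ = z ∧
        (∑ i, ∑ j, (if g i j • x i = z then f i j else 0)) = f i₀ j₀ := by
    intro z f
    obtain ⟨i₀, hi₀, hiuniq⟩ := horb z
    obtain ⟨a, ha⟩ := hi₀
    have ha' : a • x i₀ = z := ha
    obtain ⟨j₀, hj₀, hjuniq⟩ := hg i₀ a
    have hj₀' : ((g i₀ j₀)⁻¹ * a) • x i₀ = x i₀ := hj₀
    have hgj : g i₀ j₀ • x i₀ = z := by
      rw [mul_smul] at hj₀'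
      calc g i₀ j₀ • x i₀ = g i₀ j₀ • (g i₀ j₀)⁻¹ • a • x i₀ := by rw [hj₀']
        _ = a • x i₀ := smul_inv_smul _ _
        _ = z := ha
    refine ⟨i₀, j₀, hgj, ?_⟩
    rw [Finset.sum_eq_single i₀]
    · rw [Finset.sum_eq_single j₀]
      · rw [if_pos hgj]
      · intro j _ hj
        rw [if_neg]
        intro hcon
        apply hj
        apply hjuniq
        show ((g i₀ j)⁻¹ * a) • x i₀ = x i₀
        rw [mul_smul, ha', ← hcon, inv_smul_smul]
      · intro hmem
        exact absurd (Finset.mem_univ j₀) hmem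
    · intro i _ hi
      apply Finset.sum_eq_zero
      intro j _
      rw [if_neg]
      intro hcon
      exact hi (hiuniq i ⟨g i j, hcon⟩)
    · intro hmem
      exact absurd (Finset.mem_univ i₀) hmem
  refine ⟨fun i v => F v (x i), ⟨?_, ?_⟩, ?_⟩
  · -- continuity and invariance
    intro i
    refine ⟨(continuous_apply (x i)).comp hFc, ?_⟩
    intro γ hγ v
    have hγ' : γ⁻¹ • x i = x i := by
      have h0 : γ • x i = x i := hγ
      exact inv_smul_eq_iff.mpr h0.symm
    show F (pSMul γ v) (x i) = F v (x i)
    rw [congrFun (hFe γ v) (x i)]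
    show F v (γ⁻¹ • x i) = F v (x i)
    rw [hγ']
  · -- the reconstruction identity
    intro v z
    obtain ⟨i₀, j₀, hgj, hsum⟩ :=
      key z (fun i j => F (pSMul (g i j)⁻¹ v) (x i))
    refine Eq.trans ?_ hsum.symm
    show F v z = F (pSMul (g i₀ j₀)⁻¹ v) (x i₀)
    rw [congrFun (hFe (g i₀ j₀)⁻¹ v) (x i₀)]
    show F v z = F v (((g i₀ j₀)⁻¹)⁻¹ • x i₀)
    rw [inv_inv, hgj]
  · -- uniqueness
    rintro h' ⟨hinv, heq⟩
    funext i v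
    show h' i v = F v (x i)
    obtain ⟨j₁, hj₁, _⟩ := hg i 1
    rw [mul_one] at hj₁
    have hj₁mem : g i j₁ ∈ MulAction.stabilizer G (x i) := by
      simpa using inv_mem hj₁
    have heq' := heq (pSMul (g i j₁) v) (x i)
    obtain ⟨i₀, j₀, hgj, hsum⟩ :=
      key (x i) (fun i' j => h' i' (pSMul (g i' j)⁻¹ (pSMul (g i j₁) v)))
    replace heq' : F (pSMul (g i j₁) v) (x i) =
        h' i₀ (pSMul (g i₀ j₀)⁻¹ (pSMul (g i j₁) v)) := heq'.trans hsum
    have hi₀ : i₀ = i := by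
      obtain ⟨i₁, _, huniq⟩ := horb (x i)
      have e1 : i₀ = i₁ := huniq i₀ ⟨g i₀ j₀, hgj⟩
      have e2 : i = i₁ := huniq i ⟨1, one_smul _ _⟩
      rw [e1, e2]
    subst hi₀
    have hj₀mem : g i₀ j₀ ∈ MulAction.stabilizer G (x i₀) := hgj
    -- LHS of heq' equals F v (x i₀)
    have hlhs : F (pSMul (g i₀ j₁) v) (x i₀) = F v (x i₀) := by
      have h1 := congrFun (hFe (g i₀ j₁) v) (x i₀)
      rw [h1]
      show F v ((g i₀ j₁)⁻¹ • x i₀) = F v (x i₀)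
      have : (g i₀ j₁)⁻¹ • x i₀ = x i₀ := hj₁
      rw [this]
    -- RHS of heq' equals h' i₀ v
    have hrhs : h' i₀ (pSMul (g i₀ j₀)⁻¹ (pSMul (g i₀ j₁) v)) = h' i₀ v := by
      rw [pSMul_mul]
      exact hinv i₀ |>.2 _ (mul_mem (inv_mem hj₀mem) hj₁mem) v
    rw [hlhs, hrhs] at heq'
    exact heq'.symm
end
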